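/- Let H₀, H₁, H₂ be Hilbert spaces and let d₀ : Dom(d₀) ⊆ H₀ → H₁ and d₁ : Dom(d₁) ⊆ H₁ → H₂ be closed densely defined operators with range(d₀) ⊆ ker(d₁). Suppose the associated Laplacian on H₁ (defined via the quadratic form ‖d₁ x‖² + ‖d₀* x‖²) has compact resolvent. Then range(d₀) is closed in H₁ and ker(d₁)/range(d₀) is finite dimensional. -/

import Mathlib

set_option maxHeartbeats 1000000
set_option synthInstance.maxHeartbeats 400000

/-- Let `H₀, H₁, H₂` be Hilbert spaces and `d₀ : Dom(d₀) ⊆ H₀ → H₁`,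
`d₁ : Dom(d₁) ⊆ H₁ → H₂` closed densely defined operators with `range d₀ ⊆ ker d₁`.
Suppose the Laplacian `L` on `H₁` (the self-adjoint operator associated to the quadratic
form `‖d₁ x‖² + ‖d₀* x‖²` on `Dom(d₁) ∩ Dom(d₀*)`) has compact resolvent.  Then
`range d₀` is closed in `H₁` and `ker d₁ / range d₀` is finite dimensional. -/
theorem stmt2
    {H₀ H₁ H₂ : Type*}
    [NormedAddCommGroup H₀] [InnerProductSpace ℂ H₀] [CompleteSpace H₀]
    [NormedAddCommGroup H₁] [InnerProductSpace ℂ H₁] [CompleteSpace H₁]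
    [NormedAddCommGroup H₂] [InnerProductSpace ℂ H₂] [CompleteSpace H₂]
    (d₀ : H₀ →ₗ.[ℂ] H₁) (d₁ : H₁ →ₗ.[ℂ] H₂)
    (hd₀dense : Dense (d₀.domain : Set H₀)) (hd₁dense : Dense (d₁.domain : Set H₁))
    (hd₀closed : d₀.IsClosed) (hd₁closed : d₁.IsClosed)
    -- `range d₀ ⊆ ker d₁`:
    (hcomplex : ∀ x : d₀.domain, ∃ h : d₀ x ∈ d₁.domain, d₁ ⟨d₀ x, h⟩ = 0)
    -- the Laplacian `L`, a self-adjoint operator with form domain `Dom d₁ ∩ Dom d₀*`: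
    (L : H₁ →ₗ.[ℂ] H₁) (hLsa : IsSelfAdjoint L)
    (hLdom : ∀ x : L.domain, (x : H₁) ∈ d₁.domain ∧ (x : H₁) ∈ d₀.adjoint.domain)
    (hLform : ∀ (x : L.domain) (y : H₁) (hy₁ : y ∈ d₁.domain)
      (hy₂ : y ∈ d₀.adjoint.domain),
      (inner ℂ (L x) y : ℂ) =
        inner ℂ (d₁ ⟨(x : H₁), (hLdom x).1⟩) (d₁ ⟨y, hy₁⟩) +
        inner ℂ (d₀.adjoint ⟨(x : H₁), (hLdom x).2⟩) (d₀.adjoint ⟨y, hy₂⟩))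
    -- `L` has compact resolvent `R = (L + 1)⁻¹`:
    (R : H₁ →L[ℂ] H₁)
    (hRmem : ∀ x : H₁, R x ∈ L.domain)
    (hR : ∀ x : H₁, L ⟨R x, hRmem x⟩ + R x = x)
    (hR' : ∀ x : L.domain, R (L x + (x : H₁)) = x)
    (hRcompact : IsCompactOperator R) :
    IsClosed ((LinearMap.range d₀.toFun : Submodule ℂ H₁) : Set H₁) ∧
    FiniteDimensional ℂ
      ((Submodule.map d₁.domain.subtype (LinearMap.ker d₁.toFun)) ⧸
        (Submodule.comap
          (Submodule.map d₁.domain.subtype (LinearMap.ker d₁.toFun)).subtype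
          (LinearMap.range d₀.toFun))) := by
  classical
  set Rng : Submodule ℂ H₁ := LinearMap.range d₀.toFun with hRngdef
  set K₁ : Submodule ℂ H₁ := Submodule.map d₁.domain.subtype (LinearMap.ker d₁.toFun)
    with hK₁def
  have hK₁mem : ∀ x : H₁, x ∈ K₁ ↔ ∃ hx : x ∈ d₁.domain, d₁ ⟨x, hx⟩ = 0 := by
    intro x
    constructor
    · rintro ⟨⟨y, hy⟩, hy0, rfl⟩
      exact ⟨hy, by simpa [LinearPMap.toFun_eq_coe] using hy0⟩
    · rintro ⟨hx, hx0⟩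
      exact ⟨⟨x, hx⟩, by simpa [LinearPMap.toFun_eq_coe] using hx0, rfl⟩
  have hK₁closed : IsClosed (K₁ : Set H₁) := by
    have heq : (K₁ : Set H₁) = (fun x : H₁ => (x, (0 : H₂))) ⁻¹' (d₁.graph : Set (H₁ × H₂)) := by
      ext x
      simp only [Set.mem_preimage, SetLike.mem_coe, LinearPMap.mem_graph_iff, hK₁mem]
      constructor
      · rintro ⟨hx, hx0⟩; exact ⟨⟨x, hx⟩, rfl, hx0⟩
      · rintro ⟨⟨y, hy⟩, hyx, hy0⟩
        dsimp at hyx; subst hyx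
        exact ⟨hy, hy0⟩
    rw [heq]
    exact hd₁closed.preimage (continuous_id.prodMk continuous_const)
  set E₀ : Submodule ℂ H₁ := LinearMap.ker ((ContinuousLinearMap.id ℂ H₁ - R) : H₁ →ₗ[ℂ] H₁) with hE₀def
  have hE₀mem : ∀ x : H₁, x ∈ E₀ ↔ R x = x := by
    intro x
    simp only [hE₀def, LinearMap.mem_ker, ContinuousLinearMap.sub_apply,
      ContinuousLinearMap.id_apply, sub_eq_zero, LinearMap.sub_apply, ContinuousLinearMap.coe_coe,
      ContinuousLinearMap.coe_id, LinearMap.id_apply]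
    exact eq_comm
  have hE₀closed : IsClosed (E₀ : Set H₁) := by
    have : (E₀ : Set H₁) = (ContinuousLinearMap.id ℂ H₁ - R) ⁻¹' {0} := by
      ext x; simp [hE₀def]
    rw [this]
    exact isClosed_singleton.preimage (ContinuousLinearMap.id ℂ H₁ - R).continuous
  -- symmetry of L on its domain
  have Lsym : ∀ a b : L.domain, (inner ℂ (L a) ((b : H₁)) : ℂ) = inner ℂ ((a : H₁)) (L b) := by
    intro a b
    rw [hLform a b (hLdom b).1 (hLdom b).2, ← inner_conj_symm ((a : H₁)) (L b),
      hLform b a (hLdom a).1 (hLdom a).2]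
    simp [inner_conj_symm]
  -- symmetry of R
  have Rsymm : ∀ x y : H₁, (inner ℂ (R x) y : ℂ) = inner ℂ x (R y) := by
    intro x y
    conv_lhs => rw [← hR y]
    rw [inner_add_right, ← Lsym ⟨R x, hRmem x⟩ ⟨R y, hRmem y⟩]
    have : (inner ℂ (L ⟨R x, hRmem x⟩) (R y) : ℂ) + inner ℂ (R x) (R y)
        = inner ℂ (L ⟨R x, hRmem x⟩ + R x) (R y) := by
      rw [inner_add_left]
    rw [this, hR x]
  -- harmonic elements are in the kernel of L
  have hE₀dom : ∀ x : H₁, x ∈ E₀ → ∃ hx : x ∈ L.domain, L ⟨x, hx⟩ = 0 := by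
    intro x hxE
    have hRx : R x = x := (hE₀mem x).1 hxE
    refine ⟨hRx ▸ hRmem x, ?_⟩
    have h1 : (⟨x, hRx ▸ hRmem x⟩ : L.domain) = ⟨R x, hRmem x⟩ := Subtype.ext hRx.symm
    rw [h1]
    have h2 : L ⟨R x, hRmem x⟩ = x - R x := eq_sub_of_add_eq (hR x)
    rw [h2, hRx, sub_self]
  -- harmonic elements are annihilated by d₀*
  have hE₀A : ∀ x : H₁, x ∈ E₀ → ∃ hx : x ∈ d₀.adjoint.domain, d₀.adjoint ⟨x, hx⟩ = 0 := by
    intro x hxE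
    obtain ⟨hxL, hL0⟩ := hE₀dom x hxE
    refine ⟨(hLdom ⟨x, hxL⟩).2, ?_⟩
    have hform := hLform ⟨x, hxL⟩ x (hLdom ⟨x, hxL⟩).1 (hLdom ⟨x, hxL⟩).2
    rw [hL0, inner_zero_left] at hform
    rw [inner_self_eq_norm_sq_to_K, inner_self_eq_norm_sq_to_K] at hform
    have h1 : (0 : ℝ) = ‖d₁ ⟨x, (hLdom ⟨x, hxL⟩).1⟩‖ ^ 2 + ‖d₀.adjoint ⟨x, (hLdom ⟨x, hxL⟩).2⟩‖ ^ 2 := by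
      have h := congrArg Complex.re hform
      simpa [← Complex.ofReal_pow] using h
    have h2 : ‖d₀.adjoint ⟨x, (hLdom ⟨x, hxL⟩).2⟩‖ ^ 2 = 0 := by
      nlinarith [sq_nonneg ‖d₁ ⟨x, (hLdom ⟨x, hxL⟩).1⟩‖, sq_nonneg ‖d₀.adjoint ⟨x, (hLdom ⟨x, hxL⟩).2⟩‖]
    have h3 : ‖d₀.adjoint ⟨x, (hLdom ⟨x, hxL⟩).2⟩‖ = 0 := by
      nlinarith [norm_nonneg (d₀.adjoint ⟨x, (hLdom ⟨x, hxL⟩).2⟩)]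
    exact norm_eq_zero.mp h3
  -- range d₀ ⊆ K₁
  have hRngK₁ : Rng ≤ K₁ := by
    rintro y ⟨w, rfl⟩
    obtain ⟨h, h0⟩ := hcomplex w
    exact (hK₁mem _).2 ⟨h, h0⟩
  -- range d₀ ⊥ E₀
  have hRngE₀ : Rng ≤ E₀ᗮ := by
    rintro y ⟨w, rfl⟩
    rw [Submodule.mem_orthogonal]
    intro u hu
    obtain ⟨hud, hu0⟩ := hE₀A u hu
    have hfa := (LinearPMap.adjoint_isFormalAdjoint hd₀dense) ⟨u, hud⟩ w
    rw [hu0, inner_zero_left] at hfa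
    rw [LinearPMap.toFun_eq_coe]
    exact hfa.symm
  -- (1 - R) x ⊥ E₀ for every x
  have hrangeE₀ : ∀ x : H₁, x - R x ∈ E₀ᗮ := by
    intro x
    rw [Submodule.mem_orthogonal]
    intro u hu
    have hRu : R u = u := (hE₀mem u).1 hu
    rw [inner_sub_right, ← Rsymm u x, hRu, sub_self]
  -- (1 - R) is bounded below on E₀ᗮ
  have hbdd : ∃ c : ℝ, 0 < c ∧ ∀ x ∈ E₀ᗮ, c * ‖x‖ ≤ ‖x - R x‖ := by
    by_contra hcon
    push_neg at hcon
    have hex : ∀ n : ℕ, ∃ x, x ∈ E₀ᗮ ∧ ‖x‖ = 1 ∧ ‖x - R x‖ < 1 / (n + 1) := by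
      intro n
      obtain ⟨x, hxO, hxlt⟩ := hcon (1 / (n + 1)) (by positivity)
      have hx0 : x ≠ 0 := by rintro rfl; simp at hxlt
      have hxn : (0:ℝ) < ‖x‖ := norm_pos_iff.2 hx0
      refine ⟨‖x‖⁻¹ • x, Submodule.smul_mem _ _ hxO, ?_, ?_⟩
      · rw [norm_smul, norm_inv, norm_norm, inv_mul_cancel₀ hxn.ne']
      · have he : (‖x‖⁻¹ • x) - R (‖x‖⁻¹ • x) = ‖x‖⁻¹ • (x - R x) := by
          rw [R.map_smul_of_tower, smul_sub]
        rw [he, norm_smul, norm_inv, norm_norm, inv_mul_lt_iff₀ hxn]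
        calc ‖x - R x‖ < 1 / (n + 1) * ‖x‖ := hxlt
          _ = ‖x‖ * (1 / (n + 1)) := mul_comm _ _
    choose xs hxsO hxs1 hxsR using hex
    have hcpt : IsCompact (closure (R '' Metric.closedBall 0 1)) :=
      IsCompactOperator.isCompact_closure_image_closedBall (𝕜₁ := ℂ)
        (f := (R : H₁ →ₗ[ℂ] H₁)) hRcompact 1
    have hxsin : ∀ n, R (xs n) ∈ closure (R '' Metric.closedBall 0 1) := fun n =>
      subset_closure ⟨xs n, by simp [hxs1 n], rfl⟩
    obtain ⟨w, hwmem, φ, hφ, hconv⟩ := hcpt.tendsto_subseq hxsin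
    have hdiff : Filter.Tendsto (fun k => xs (φ k) - R (xs (φ k))) Filter.atTop (nhds 0) := by
      refine squeeze_zero_norm (fun k => ?_) tendsto_one_div_add_atTop_nhds_zero_nat
      have h1 : ‖xs (φ k) - R (xs (φ k))‖ ≤ 1 / (φ k + 1) := (hxsR (φ k)).le
      have h2 : (1:ℝ) / (φ k + 1) ≤ 1 / (k + 1) := by
        apply one_div_le_one_div_of_le (by positivity)
        have : k ≤ φ k := hφ.le_apply
        linarith [(Nat.cast_le (α := ℝ)).2 this]
      linarith
    have hxconv : Filter.Tendsto (fun k => xs (φ k)) Filter.atTop (nhds w) := by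
      have := hdiff.add hconv
      simpa using this
    have hwO : w ∈ E₀ᗮ :=
      E₀.isClosed_orthogonal.mem_of_tendsto hxconv
        (Filter.Eventually.of_forall fun k => hxsO (φ k))
    have hw1 : ‖w‖ = 1 := by
      have h2 : Filter.Tendsto (fun _ : ℕ => (1:ℝ)) Filter.atTop (nhds ‖w‖) := by
        simpa [hxs1] using hxconv.norm
      exact tendsto_nhds_unique h2 tendsto_const_nhds
    have hwE : w ∈ E₀ := by
      have h1 : Filter.Tendsto (fun k => R (xs (φ k))) Filter.atTop (nhds (R w)) :=
        (R.continuous.tendsto w).comp hxconv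
      exact (hE₀mem w).2 (tendsto_nhds_unique h1 hconv)
    have hw0 : w = 0 :=
      inner_self_eq_zero.1 ((Submodule.mem_orthogonal _ _).1 hwO w hwE)
    rw [hw0] at hw1
    norm_num at hw1
  haveI : CompleteSpace ↥E₀ := hE₀closed.completeSpace_coe
  haveI : CompleteSpace ↥(E₀ᗮ) := E₀.isClosed_orthogonal.completeSpace_coe
  obtain ⟨c, hc, hcb⟩ := hbdd
  -- surjectivity of (1 - R) onto E₀ᗮ
  have hsurj : ∀ y ∈ E₀ᗮ, ∃ z, z - R z = y := by
    set f : ↥(E₀ᗮ) →L[ℂ] H₁ :=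
      (ContinuousLinearMap.id ℂ H₁ - R).comp (E₀ᗮ).subtypeL with hfdef
    have hfapp : ∀ x : ↥(E₀ᗮ), f x = (x : H₁) - R (x : H₁) := fun x => rfl
    have hanti : AntilipschitzWith (⟨c, hc.le⟩ : NNReal)⁻¹ f := by
      apply AntilipschitzWith.of_le_mul_dist
      intro x y
      have hdist : dist x y = ‖(x : H₁) - (y : H₁)‖ := by
        rw [Subtype.dist_eq, dist_eq_norm]
      have h1 : c * ‖(x : H₁) - (y : H₁)‖ ≤ ‖f x - f y‖ := by
        have h2 := hcb ((x : H₁) - (y : H₁)) (Submodule.sub_mem _ x.2 y.2)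
        have heq : f x - f y = ((x : H₁) - (y : H₁)) - R ((x : H₁) - (y : H₁)) := by
          simp only [hfapp, map_sub]
          abel
        rw [heq]
        exact h2
      rw [hdist, dist_eq_norm]; change _ ≤ c⁻¹ * _
      rw [inv_mul_eq_div, le_div_iff₀ hc]
      linarith
    have hclosed : IsClosed (Set.range f) := hanti.isClosed_range f.uniformContinuous
    set M : Submodule ℂ H₁ :=
      Submodule.map (ContinuousLinearMap.id ℂ H₁ - R).toLinearMap E₀ᗮ with hMdef
    have hMapp : ∀ x : H₁, (ContinuousLinearMap.id ℂ H₁ - R).toLinearMap x = x - R x :=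
      fun x => rfl
    have hMr : (M : Set H₁) = Set.range f := by
      ext y
      constructor
      · rintro ⟨x, hx, rfl⟩; exact ⟨⟨x, hx⟩, rfl⟩
      · rintro ⟨x, rfl⟩; exact ⟨x, x.2, rfl⟩
    have hMclosed : IsClosed (M : Set H₁) := by rw [hMr]; exact hclosed
    haveI : CompleteSpace ↥M := hMclosed.completeSpace_coe
    have hMle : M ≤ E₀ᗮ := by
      rintro y ⟨x, hx, rfl⟩
      rw [hMapp]
      exact hrangeE₀ x
    intro y hy
    set w := y - (Submodule.orthogonalProjection M y : H₁) with hwdef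
    have hwMo : w ∈ Mᗮ := Submodule.sub_starProjection_mem_orthogonal y
    have hall : ∀ x : H₁, (inner ℂ (x - R x) w : ℂ) = 0 := by
      intro x
      set p := (Submodule.orthogonalProjection E₀ x : H₁) with hpdef
      have hminus : x - p ∈ E₀ᗮ := Submodule.sub_starProjection_mem_orthogonal x
      have hpE : R p = p := (hE₀mem p).1 (Submodule.orthogonalProjection E₀ x).2
      have hsplit : x - R x = (x - p) - R (x - p) := by
        rw [map_sub, hpE]
        abel
      rw [hsplit]
      have hm : (x - p) - R (x - p) ∈ M := ⟨x - p, hminus, rfl⟩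
      exact (Submodule.mem_orthogonal M w).1 hwMo _ hm
    have hw0 : w - R w = 0 := by
      have hz : ∀ x : H₁, (inner ℂ x (w - R w) : ℂ) = 0 := by
        intro x
        calc (inner ℂ x (w - R w) : ℂ) = inner ℂ x w - inner ℂ x (R w) := inner_sub_right _ _ _
          _ = inner ℂ x w - inner ℂ (R x) w := by rw [Rsymm]
          _ = inner ℂ (x - R x) w := (inner_sub_left _ _ _).symm
          _ = 0 := hall x
      exact inner_self_eq_zero.1 (hz (w - R w))
    have hwE : w ∈ E₀ := (hE₀mem w).2 (sub_eq_zero.1 hw0).symm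
    have hwO : w ∈ E₀ᗮ := Submodule.sub_mem _ hy (hMle (Submodule.orthogonalProjection M y).2)
    have hwz : w = 0 := inner_self_eq_zero.1 ((Submodule.mem_orthogonal _ _).1 hwO w hwE)
    have hyM : y ∈ M := by
      have hyp : y = (Submodule.orthogonalProjection M y : H₁) := by
        have := sub_eq_zero.1 (hwdef ▸ hwz : y - (Submodule.orthogonalProjection M y : H₁) = 0)
        exact this
      rw [hyp]
      exact (Submodule.orthogonalProjection M y).2
    obtain ⟨x, _, hxy⟩ := hyM
    exact ⟨x, by rw [← hMapp x]; exact hxy⟩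
  haveI : CompleteSpace ↥K₁ := hK₁closed.completeSpace_coe
  -- main regularity step: K₁ ∩ E₀ᗮ ⊆ range d₀
  have hkey : ∀ y, y ∈ K₁ → y ∈ E₀ᗮ → y ∈ Rng := by
    intro y hyK hyO
    obtain ⟨z, hz⟩ := hsurj y hyO
    have huL : R z ∈ L.domain := hRmem z
    have hLu : L ⟨R z, huL⟩ = y := by
      have h2 : L ⟨R z, hRmem z⟩ = z - R z := eq_sub_of_add_eq (hR z)
      rw [h2, hz]
    have hadom : R z ∈ d₀.adjoint.domain := (hLdom ⟨R z, huL⟩).2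
    set a := d₀.adjoint ⟨R z, hadom⟩ with hadef
    have hd₀K : ∀ x : d₀.domain, (d₀ x : H₁) ∈ K₁ := fun x => by
      obtain ⟨h, h0⟩ := hcomplex x; exact (hK₁mem _).2 ⟨h, h0⟩
    have hmain : ∀ (v : H₁) (hv : v ∈ d₀.adjoint.domain),
        (inner ℂ y v : ℂ) = inner ℂ a (d₀.adjoint ⟨v, hv⟩) := by
      intro v hv
      set v₁ := (Submodule.orthogonalProjection K₁ v : H₁) with hv₁def
      have hv₁K : v₁ ∈ K₁ := (Submodule.orthogonalProjection K₁ v).2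
      have hv₂o : v - v₁ ∈ K₁ᗮ := Submodule.sub_starProjection_mem_orthogonal v
      have hv₂mem : v - v₁ ∈ d₀.adjoint.domain := by
        apply LinearPMap.mem_adjoint_domain_of_exists
        exact ⟨0, fun x => by
          rw [inner_zero_left]
          exact ((Submodule.mem_orthogonal' K₁ _).1 hv₂o _ (hd₀K x)).symm⟩
      have hv₂val : d₀.adjoint ⟨v - v₁, hv₂mem⟩ = 0 := by
        apply LinearPMap.adjoint_apply_eq hd₀dense
        intro x
        rw [inner_zero_left]
        exact ((Submodule.mem_orthogonal' K₁ _).1 hv₂o _ (hd₀K x)).symm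
      have hv₁mem : v₁ ∈ d₀.adjoint.domain := by
        have hsub : v₁ = v - (v - v₁) := by abel
        rw [hsub]; exact Submodule.sub_mem _ hv hv₂mem
      have hv₁val : d₀.adjoint ⟨v₁, hv₁mem⟩ = d₀.adjoint ⟨v, hv⟩ := by
        have hsub : (⟨v₁, hv₁mem⟩ : d₀.adjoint.domain) = ⟨v, hv⟩ - ⟨v - v₁, hv₂mem⟩ :=
          Subtype.ext (by simp)
        rw [hsub, LinearPMap.map_sub, hv₂val, sub_zero]
      obtain ⟨hv₁d, hv₁d0⟩ := (hK₁mem v₁).1 hv₁K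
      have hform := hLform ⟨R z, huL⟩ v₁ hv₁d hv₁mem
      rw [hLu, hv₁d0, inner_zero_right, zero_add] at hform
      have hyv₂ : (inner ℂ y (v - v₁) : ℂ) = 0 := (Submodule.mem_orthogonal K₁ _).1 hv₂o y hyK
      calc (inner ℂ y v : ℂ) = inner ℂ y (v₁ + (v - v₁)) := by
            rw [show v₁ + (v - v₁) = v from by abel]
        _ = inner ℂ y v₁ + inner ℂ y (v - v₁) := inner_add_right _ _ _
        _ = inner ℂ a (d₀.adjoint ⟨v, hv⟩) := by rw [hyv₂, add_zero, hform, hv₁val]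
    -- the graph argument : (a, y) belongs to the (closed) graph of d₀
    set e := WithLp.prodContinuousLinearEquiv 2 ℂ H₀ H₁ with hedef
    set G2 : Submodule ℂ (WithLp 2 (H₀ × H₁)) :=
      d₀.graph.comap e.toLinearEquiv.toLinearMap with hG2def
    have hG2closed : IsClosed (G2 : Set (WithLp 2 (H₀ × H₁))) := by
      have heq : (G2 : Set _) = e ⁻¹' (d₀.graph : Set (H₀ × H₁)) := rfl
      rw [heq]
      exact hd₀closed.preimage e.continuous
    haveI : CompleteSpace ↥G2 := hG2closed.completeSpace_coe
    have hin : e.symm (a, y) ∈ G2ᗮᗮ := by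
      rw [Submodule.mem_orthogonal]
      intro g hg
      have hpq : ∀ x : d₀.domain, (inner ℂ ((x : H₀)) (e g).1 : ℂ) + inner ℂ (d₀ x) (e g).2 = 0 := by
        intro x
        have hw : e.symm ((x : H₀), d₀ x) ∈ G2 := by
          show e (e.symm _) ∈ d₀.graph
          rw [e.apply_symm_apply]
          exact d₀.mem_graph x
        have h0 := (Submodule.mem_orthogonal G2 g).1 hg _ hw
        rw [WithLp.prod_inner_apply] at h0
        exact h0
      have hqmem : (e g).2 ∈ d₀.adjoint.domain := by
        apply LinearPMap.mem_adjoint_domain_of_exists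
        refine ⟨-(e g).1, fun x => ?_⟩
        have h2 := congrArg (starRingEnd ℂ) (hpq x)
        simp only [map_add, inner_conj_symm, map_zero] at h2
        rw [inner_neg_left]
        linear_combination -h2
      have hqval : d₀.adjoint ⟨(e g).2, hqmem⟩ = -(e g).1 := by
        apply LinearPMap.adjoint_apply_eq hd₀dense
        intro x
        have h2 := congrArg (starRingEnd ℂ) (hpq x)
        simp only [map_add, inner_conj_symm, map_zero] at h2
        rw [inner_neg_left]
        linear_combination -h2
      have hmainq := hmain (e g).2 hqmem
      rw [hqval] at hmainq
      have hsnd : (inner ℂ ((e g).2) y : ℂ) = - inner ℂ ((e g).1) a := by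
        have h2 := congrArg (starRingEnd ℂ) hmainq
        rwa [inner_conj_symm, inner_conj_symm, inner_neg_left] at h2
      show (inner ℂ ((e g).1) a : ℂ) + inner ℂ ((e g).2) y = 0
      rw [hsnd]
      ring
    rw [Submodule.orthogonal_orthogonal] at hin
    have hgr : (a, y) ∈ d₀.graph := by
      have h1 : e (e.symm (a, y)) ∈ d₀.graph := hin
      rwa [e.apply_symm_apply] at h1
    obtain ⟨x', hx1, hx2⟩ := (LinearPMap.mem_graph_iff d₀).1 hgr
    exact ⟨x', by rw [LinearPMap.toFun_eq_coe]; exact hx2⟩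
  -- E₀ is finite dimensional
  haveI hfinE₀ : FiniteDimensional ℂ ↥E₀ := by
    have hcpt : IsCompact (closure (R '' Metric.closedBall 0 1)) :=
      IsCompactOperator.isCompact_closure_image_closedBall (𝕜₁ := ℂ)
        (f := (R : H₁ →ₗ[ℂ] H₁)) hRcompact 1
    have hsub : (E₀ : Set H₁) ∩ Metric.closedBall 0 1 ⊆ closure (R '' Metric.closedBall 0 1) := by
      rintro x ⟨hxE, hxb⟩
      exact subset_closure ⟨x, hxb, (hE₀mem x).1 hxE⟩
    have hCcl : IsClosed ((E₀ : Set H₁) ∩ Metric.closedBall 0 1) :=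
      hE₀closed.inter Metric.isClosed_closedBall
    have hCcpt : IsCompact ((E₀ : Set H₁) ∩ Metric.closedBall 0 1) :=
      hcpt.of_isClosed_subset hCcl hsub
    have hball : IsCompact (Metric.closedBall (0 : ↥E₀) 1) := by
      rw [Subtype.isCompact_iff]
      have himg : (Subtype.val '' Metric.closedBall (0 : ↥E₀) 1)
          = (E₀ : Set H₁) ∩ Metric.closedBall 0 1 := by
        ext x
        constructor
        · rintro ⟨⟨x, hx⟩, hb, rfl⟩
          refine ⟨hx, ?_⟩
          simpa [Metric.mem_closedBall, dist_eq_norm] using hb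
        · rintro ⟨hx, hb⟩
          refine ⟨⟨x, hx⟩, ?_, rfl⟩
          simpa [Metric.mem_closedBall, dist_eq_norm] using hb
      rw [himg]
      exact hCcpt
    exact FiniteDimensional.of_isCompact_closedBall₀ ℂ one_pos hball
  -- the range of d₀ equals K₁ ⊓ E₀ᗮ
  have hRngEq : Rng = K₁ ⊓ E₀ᗮ := by
    apply le_antisymm
    · exact le_inf hRngK₁ hRngE₀
    · rintro y ⟨hyK, hyO⟩
      exact hkey y hyK hyO
  constructor
  · rw [hRngEq]
    exact hK₁closed.inter E₀.isClosed_orthogonal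
  · -- the quotient embeds into E₀
    set φ : ↥K₁ →ₗ[ℂ] ↥E₀ :=
      (Submodule.orthogonalProjection E₀).toLinearMap.comp K₁.subtype with hφdef
    have hker : LinearMap.ker φ = Submodule.comap K₁.subtype Rng := by
      ext x
      simp only [LinearMap.mem_ker, Submodule.mem_comap, hφdef, LinearMap.comp_apply,
        ContinuousLinearMap.coe_coe, Submodule.subtype_apply]
      constructor
      · intro h0
        have hxO : (x : H₁) ∈ E₀ᗮ := by
          have hsub : (x : H₁) - (Submodule.orthogonalProjection E₀ (x : H₁) : H₁) ∈ E₀ᗮ :=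
            Submodule.sub_starProjection_mem_orthogonal (K := E₀) (x : H₁)
          rw [h0] at hsub
          simpa using hsub
        exact hkey _ x.2 hxO
      · intro hxR
        exact Submodule.orthogonalProjectionOnto_apply_of_mem_orthogonal (hRngE₀ hxR)
    have hquot := (LinearMap.quotKerEquivRange φ).symm
    rw [hker] at hquot
    exact Module.Finite.equiv hquot
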